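/- Let m > 0 and p ∈ ℝ³ with p ≠ 0. Set u₊(p) = √(½(1 + m/λ(p))), u₋(p) = √(½(1 − m/λ(p))), and U(p) = u₊(p)·I₄ + u₋(p)·β·(α·p)/|p|. Then U(p) is invertible with U(p)⁻¹ = u₊(p)·I₄ − u₋(p)·β·(α·p)/|p|, and U(p)·(α·p + mβ)·U(p)⁻¹ = λ(p)·β. -/

import Mathlib

open Matrix

noncomputable section

/-- `lam m p = √(|p|² + m²)`. -/
noncomputable def lam (m : ℝ) (p : EuclideanSpace ℝ (Fin 3)) : ℝ :=
  Real.sqrt (‖p‖ ^ 2 + m ^ 2)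

/-- The Pauli matrices. -/
def pauli : Fin 3 → Matrix (Fin 2) (Fin 2) ℂ
  | 0 => !![0, 1; 1, 0]
  | 1 => !![0, -Complex.I; Complex.I, 0]
  | 2 => !![1, 0; 0, -1]

/-- The Dirac matrix `β`. -/
def diracBeta : Matrix (Fin 4) (Fin 4) ℂ :=
  Matrix.reindex finSumFinEquiv finSumFinEquiv
    (Matrix.fromBlocks (1 : Matrix (Fin 2) (Fin 2) ℂ) 0 0 (-1 : Matrix (Fin 2) (Fin 2) ℂ))

/-- The Dirac matrices `αₖ`. -/
def diracAlpha (k : Fin 3) : Matrix (Fin 4) (Fin 4) ℂ :=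
  Matrix.reindex finSumFinEquiv finSumFinEquiv (Matrix.fromBlocks (0 : Matrix (Fin 2) (Fin 2) ℂ) (pauli k) (pauli k) (0 : Matrix (Fin 2) (Fin 2) ℂ))

/-- `α · v` for `v ∈ ℝ³`. -/
def alphaDot (v : EuclideanSpace ℝ (Fin 3)) : Matrix (Fin 4) (Fin 4) ℂ :=
  ∑ k, (v k : ℂ) • diracAlpha k

/-- The Dirac symbol `Ĥ(p) = α·p + mβ`. -/
def diracSymbol (m : ℝ) (p : EuclideanSpace ℝ (Fin 3)) : Matrix (Fin 4) (Fin 4) ℂ :=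
  alphaDot p + (m : ℂ) • diracBeta

/-- `Λ̂₊(p) = ½(I + (m/λ(p))β + (1/λ(p)) α·p)`. -/
def LambdaPlus (m : ℝ) (p : EuclideanSpace ℝ (Fin 3)) : Matrix (Fin 4) (Fin 4) ℂ :=
  (2 : ℂ)⁻¹ • (1 + ((m / lam m p : ℝ) : ℂ) • diracBeta + (((lam m p)⁻¹ : ℝ) : ℂ) • alphaDot p)

/-- `Λ̂₋(p) = ½(I − (m/λ(p))β − (1/λ(p)) α·p)`. -/
def LambdaMinus (m : ℝ) (p : EuclideanSpace ℝ (Fin 3)) : Matrix (Fin 4) (Fin 4) ℂ :=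
  (2 : ℂ)⁻¹ • (1 - ((m / lam m p : ℝ) : ℂ) • diracBeta - (((lam m p)⁻¹ : ℝ) : ℂ) • alphaDot p)

end

/-- `u₊(p) = √(½(1 + m/λ(p)))`. -/
noncomputable def uPlus (m : ℝ) (p : EuclideanSpace ℝ (Fin 3)) : ℝ :=
  Real.sqrt ((1 + m / lam m p) / 2)

/-- `u₋(p) = √(½(1 − m/λ(p)))`. -/
noncomputable def uMinus (m : ℝ) (p : EuclideanSpace ℝ (Fin 3)) : ℝ :=
  Real.sqrt ((1 - m / lam m p) / 2)

/-- `U(p) = u₊(p)·I₄ + u₋(p)·β·(α·p)/|p|`. -/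
noncomputable def Umatrix (m : ℝ) (p : EuclideanSpace ℝ (Fin 3)) : Matrix (Fin 4) (Fin 4) ℂ :=
  ((uPlus m p : ℝ) : ℂ) • 1 + ((uMinus m p / ‖p‖ : ℝ) : ℂ) • (diracBeta * alphaDot p)

/-- `u₊(p)·I₄ − u₋(p)·β·(α·p)/|p|`, the claimed inverse of `U(p)`. -/
noncomputable def UmatrixInv (m : ℝ) (p : EuclideanSpace ℝ (Fin 3)) : Matrix (Fin 4) (Fin 4) ℂ :=
  ((uPlus m p : ℝ) : ℂ) • 1 - ((uMinus m p / ‖p‖ : ℝ) : ℂ) • (diracBeta * alphaDot p)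


open Matrix in
private lemma es0' : (finSumFinEquiv (m:=2) (n:=2)).symm (0 : Fin 4) = Sum.inl 0 := by decide
open Matrix in
private lemma es1' : (finSumFinEquiv (m:=2) (n:=2)).symm (1 : Fin 4) = Sum.inl 1 := by decide
open Matrix in
private lemma es2' : (finSumFinEquiv (m:=2) (n:=2)).symm (2 : Fin 4) = Sum.inr 0 := by decide
open Matrix in
private lemma es3' : (finSumFinEquiv (m:=2) (n:=2)).symm (3 : Fin 4) = Sum.inr 1 := by decide

private lemma beta_explicit : diracBeta = !![1,0,0,0; 0,1,0,0; 0,0,-1,0; 0,0,0,-1] := by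
  ext i j
  fin_cases i <;> fin_cases j <;>
    simp [diracBeta, es0', es1', es2', es3', Matrix.one_apply, Fin.ext_iff,
      Matrix.vecHead, Matrix.vecTail]

private lemma alphaDot_explicit (v : EuclideanSpace ℝ (Fin 3)) :
    alphaDot v = !![0,0,(v 2 : ℂ),(v 0 : ℂ) - (v 1 : ℂ)*Complex.I;
      0,0,(v 0 : ℂ)+(v 1 : ℂ)*Complex.I,-(v 2 : ℂ);
      (v 2 : ℂ),(v 0 : ℂ)-(v 1 : ℂ)*Complex.I,0,0;
      (v 0 : ℂ)+(v 1 : ℂ)*Complex.I,-(v 2 : ℂ),0,0] := by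
  simp only [alphaDot, Fin.sum_univ_three]
  ext i j
  fin_cases i <;> fin_cases j <;>
    simp [diracAlpha, pauli, es0', es1', es2', es3', Matrix.vecHead, Matrix.vecTail] <;> ring

private lemma beta_mul_beta : diracBeta * diracBeta = 1 := by
  rw [beta_explicit]
  ext i j
  fin_cases i <;> fin_cases j <;>
    simp (config := { decide := true }) [Matrix.mul_apply, Fin.sum_univ_four,
      Matrix.one_apply, Fin.ext_iff, Matrix.vecHead, Matrix.vecTail]

private lemma alpha_beta_anticomm (p : EuclideanSpace ℝ (Fin 3)) :
    alphaDot p * diracBeta = -(diracBeta * alphaDot p) := by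
  rw [beta_explicit, alphaDot_explicit]
  ext i j
  fin_cases i <;> fin_cases j <;>
    simp (config := { decide := true }) [Matrix.mul_apply, Fin.sum_univ_four,
      Matrix.neg_apply, Matrix.vecHead, Matrix.vecTail] <;> ring

private lemma norm_sq_eq_sum (p : EuclideanSpace ℝ (Fin 3)) :
    ‖p‖ ^ 2 = p 0 ^ 2 + p 1 ^ 2 + p 2 ^ 2 := by
  rw [EuclideanSpace.norm_eq, Real.sq_sqrt (by positivity)]
  simp [Fin.sum_univ_three, Real.norm_eq_abs, sq_abs]

private lemma alpha_mul_alpha (p : EuclideanSpace ℝ (Fin 3)) :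
    alphaDot p * alphaDot p = ((‖p‖ ^ 2 : ℝ) : ℂ) • 1 := by
  have hn : ((‖p‖ ^ 2 : ℝ) : ℂ) = (p 0 : ℂ)^2 + (p 1 : ℂ)^2 + (p 2 : ℂ)^2 := by
    rw [norm_sq_eq_sum]; push_cast; ring
  rw [alphaDot_explicit, hn]
  ext i j
  fin_cases i <;> fin_cases j <;>
    simp (config := { decide := true }) [Matrix.mul_apply, Fin.sum_univ_four,
      Matrix.one_apply, Fin.ext_iff, Matrix.vecHead, Matrix.vecTail] <;>
    (first | ring1 | linear_combination (-(p 1 : ℂ)^2) * Complex.I_sq)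

private lemma conj_key (A B : Matrix (Fin 4) (Fin 4) ℂ) (s t w mc l : ℂ)
    (hBB : B * B = 1) (hAB : A * B = -(B * A)) (hAA : A * A = w • 1)
    (h1 : s^2 + t^2*w = 1) (h2 : s^2 - t^2*w - 2*s*t*mc = 0)
    (h3 : mc*(s^2 - t^2*w) + 2*s*t*w = l) :
    (s•1 + t•(B*A)) * (s•1 - t•(B*A)) = 1 ∧
    (s•1 - t•(B*A)) * (s•1 + t•(B*A)) = 1 ∧
    (s•1 + t•(B*A)) * (A + mc•B) * (s•1 - t•(B*A)) = l • B := by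
  have hC2 : (B*A)*(B*A) = -(w • (1 : Matrix (Fin 4) (Fin 4) ℂ)) := by
    calc B*A*(B*A) = B*(A*B)*A := by noncomm_ring
      _ = B*(-(B*A))*A := by rw [hAB]
      _ = -(B*B*(A*A)) := by noncomm_ring
      _ = -(w • 1) := by rw [hBB, hAA]; simp
  have hCA : (B*A)*A = w • B := by
    calc B*A*A = B*(A*A) := by noncomm_ring
      _ = w • B := by rw [hAA]; simp [Matrix.mul_smul]
  have hAC : A*(B*A) = -(w • B) := by
    calc A*(B*A) = (A*B)*A := by noncomm_ring
      _ = -(B*A*A) := by rw [hAB]; noncomm_ring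
      _ = -(w • B) := by rw [hCA]
  have hCB : (B*A)*B = -A := by
    calc B*A*B = B*(A*B) := by noncomm_ring
      _ = -(B*B*A) := by rw [hAB]; noncomm_ring
      _ = -A := by rw [hBB]; simp
  have hBC : B*(B*A) = A := by
    calc B*(B*A) = B*B*A := by noncomm_ring
      _ = A := by rw [hBB]; simp
  refine ⟨?_, ?_, ?_⟩
  · have e : (s•1 + t•(B*A)) * (s•(1:Matrix (Fin 4) (Fin 4) ℂ) - t•(B*A))
        = (s*s)•1 - (t*t)•((B*A)*(B*A)) := by
      simp only [Matrix.add_mul, Matrix.mul_sub, smul_mul_assoc, Matrix.mul_smul,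
        Matrix.one_mul, Matrix.mul_one, smul_smul]
      module
    rw [e, hC2]
    match_scalars
    linear_combination h1
  · have e : (s•1 - t•(B*A)) * (s•(1:Matrix (Fin 4) (Fin 4) ℂ) + t•(B*A))
        = (s*s)•1 - (t*t)•((B*A)*(B*A)) := by
      simp only [Matrix.add_mul, Matrix.sub_mul, Matrix.mul_add, Matrix.mul_sub,
        smul_mul_assoc, Matrix.mul_smul, Matrix.one_mul, Matrix.mul_one, smul_smul]
      module
    rw [e, hC2]
    match_scalars
    linear_combination h1
  · have e1 : (s•1 + t•(B*A)) * (A + mc•B)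
        = s•A + (s*mc)•B + t•((B*A)*A) + (t*mc)•((B*A)*B) := by
      simp only [Matrix.add_mul, Matrix.mul_add, smul_mul_assoc, Matrix.mul_smul,
        Matrix.one_mul, Matrix.mul_one, smul_smul]
      module
    rw [e1, hCA, hCB]
    have e2 : (s•A + (s*mc)•B + t•(w•B) + (t*mc)•(-A)) * (s•(1:Matrix (Fin 4) (Fin 4) ℂ) - t•(B*A))
        = (s*s - s*t*mc)•A + (s*s*mc + s*t*w)•B
          - (s*t)•(A*(B*A)) - (s*mc*t + t*t*w)•(B*(B*A)) + (t*t*mc)•(A*(B*A)) := by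
      simp only [Matrix.add_mul, Matrix.sub_mul, Matrix.mul_add, Matrix.mul_sub,
        smul_mul_assoc, Matrix.mul_smul, Matrix.one_mul, Matrix.mul_one, smul_smul,
        neg_mul, smul_neg, neg_smul]
      module
    rw [e2, hAC, hBC]
    match_scalars
    · linear_combination h2
    · linear_combination h3

private lemma scalar_facts (m : ℝ) (hm : 0 < m) (p : EuclideanSpace ℝ (Fin 3)) (hp : p ≠ 0) :
    uPlus m p ^ 2 + (uMinus m p / ‖p‖)^2 * ‖p‖^2 = 1 ∧
    uPlus m p ^ 2 - (uMinus m p / ‖p‖)^2 * ‖p‖^2 - 2 * uPlus m p * (uMinus m p / ‖p‖) * m = 0 ∧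
    m * (uPlus m p ^ 2 - (uMinus m p / ‖p‖)^2 * ‖p‖^2)
      + 2 * uPlus m p * (uMinus m p / ‖p‖) * ‖p‖^2 = lam m p := by
  set n := ‖p‖ with hn
  set L := lam m p with hLdef
  have hn0 : 0 < n := norm_pos_iff.mpr hp
  have hL0 : 0 < L := Real.sqrt_pos.mpr (by positivity)
  have hL2 : L ^ 2 = n ^ 2 + m ^ 2 := Real.sq_sqrt (by positivity)
  have hmL : m ≤ L := by
    rw [hLdef, lam]
    calc m = Real.sqrt (m ^ 2) := (Real.sqrt_sq hm.le).symm
      _ ≤ Real.sqrt (‖p‖ ^ 2 + m ^ 2) := Real.sqrt_le_sqrt (by nlinarith [sq_nonneg ‖p‖])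
  have hxle : m / L ≤ 1 := (div_le_one hL0).mpr hmL
  have ha2 : uPlus m p ^ 2 = (1 + m / L) / 2 := Real.sq_sqrt (by positivity)
  have hb2 : uMinus m p ^ 2 = (1 - m / L) / 2 := Real.sq_sqrt (by linarith)
  have hab : uPlus m p * uMinus m p = n / (2 * L) := by
    rw [uPlus, uMinus, ← Real.sqrt_mul (by positivity), ← hLdef]
    have : (1 + m / L) / 2 * ((1 - m / L) / 2) = (n / (2 * L)) ^ 2 := by
      field_simp
      nlinarith [hL2]
    rw [this, Real.sqrt_sq (by positivity)]
  refine ⟨?_, ?_, ?_⟩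
  · field_simp
    nlinarith [ha2, hb2]
  · field_simp
    linear_combination n*ha2 - n*hb2 - 2*m*hab
  · field_simp
    have hinv : L⁻¹ * (n^2 + m^2) = L := by
      rw [← hL2]; field_simp
    linear_combination m*ha2 - m*hb2 + 2*n*hab + hinv


/-- For `m > 0` and `p ≠ 0`, the matrix `U(p)` is invertible, its inverse is
`u₊(p)·I₄ − u₋(p)·β·(α·p)/|p|`, and `U(p)·(α·p + mβ)·U(p)⁻¹ = λ(p)·β`. -/
theorem U_diagonalizes_dirac_symbol (m : ℝ) (hm : 0 < m)
    (p : EuclideanSpace ℝ (Fin 3)) (hp : p ≠ 0) :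
    Umatrix m p * UmatrixInv m p = 1 ∧
    UmatrixInv m p * Umatrix m p = 1 ∧
    Umatrix m p * diracSymbol m p * UmatrixInv m p = ((lam m p : ℝ) : ℂ) • diracBeta := by
  obtain ⟨h1R, h2R, h3R⟩ := scalar_facts m hm p hp
  have h1 : ((uPlus m p : ℝ) : ℂ)^2 + ((uMinus m p / ‖p‖ : ℝ) : ℂ)^2 * ((‖p‖^2 : ℝ) : ℂ) = 1 := by
    exact_mod_cast h1R
  have h2 : ((uPlus m p : ℝ) : ℂ)^2 - ((uMinus m p / ‖p‖ : ℝ) : ℂ)^2 * ((‖p‖^2 : ℝ) : ℂ)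
      - 2 * ((uPlus m p : ℝ) : ℂ) * ((uMinus m p / ‖p‖ : ℝ) : ℂ) * (m : ℂ) = 0 := by
    exact_mod_cast h2R
  have h3 : (m : ℂ) * (((uPlus m p : ℝ) : ℂ)^2 - ((uMinus m p / ‖p‖ : ℝ) : ℂ)^2 * ((‖p‖^2 : ℝ) : ℂ))
      + 2 * ((uPlus m p : ℝ) : ℂ) * ((uMinus m p / ‖p‖ : ℝ) : ℂ) * ((‖p‖^2 : ℝ) : ℂ)
      = ((lam m p : ℝ) : ℂ) := by
    exact_mod_cast h3R
  have key := conj_key (alphaDot p) diracBeta ((uPlus m p : ℝ) : ℂ)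
    ((uMinus m p / ‖p‖ : ℝ) : ℂ) ((‖p‖^2 : ℝ) : ℂ) (m : ℂ) ((lam m p : ℝ) : ℂ)
    beta_mul_beta (alpha_beta_anticomm p) (alpha_mul_alpha p) h1 h2 h3
  simpa only [Umatrix, UmatrixInv, diracSymbol] using key
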